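/- Let τ₁ = (1 2 ⋯ d) be a d-cycle in S_n, and let s₁, s₂ be permutations supported on the support of τ₁, each a product of pairwise disjoint transpositions, such that s₁τ₁s₁⁻¹ = s₂τ₁s₂⁻¹ = τ₁⁻¹. If s₁ and s₂ are conjugate in S_n, then there exists an integer z such that τ₁^z s₁ τ₁^{-z} = s₂. -/
import Mathlib


open Equiv Equiv.Perm Finset

/-- The "non-trivial centralizer" `Cent₀(σ)`: permutations commuting with `σ`
whose support is contained in the support of `σ`. -/
def Cent0 {n : ℕ} (σ : Equiv.Perm (Fin n)) : Subgroup (Equiv.Perm (Fin n)) where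
  carrier := {π | Commute π σ ∧ π.support ⊆ σ.support}
  one_mem' := ⟨Commute.one_left σ, by simp⟩
  mul_mem' := by
    intro a b ha hb
    exact ⟨ha.1.mul_left hb.1, (Equiv.Perm.support_mul_le a b).trans (sup_le ha.2 hb.2)⟩
  inv_mem' := by
    intro a ha
    exact ⟨ha.1.inv_left, by rw [Equiv.Perm.support_inv]; exact ha.2⟩

/-- The product `∏_{i ∈ s} τᵢ^{zᵢ}` of powers of pairwise disjoint permutations. -/
def Kprod {n k : ℕ} (τ : Fin k → Equiv.Perm (Fin n))
    (hdisj : ∀ i j, i ≠ j → Equiv.Perm.Disjoint (τ i) (τ j))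
    (s : Finset (Fin k)) (z : Fin k → ℤ) : Equiv.Perm (Fin n) :=
  s.noncommProd (fun i => τ i ^ z i)
    (fun a _ b _ hab => Commute.zpow_zpow ((hdisj a b hab).commute) _ _)

/-- The subgroup `H_σ = { x ∈ S_{X_σ} : xσx⁻¹ = σ^z for some integer z }`, as a set. -/
def Hgrp {n : ℕ} (σ : Equiv.Perm (Fin n)) : Set (Equiv.Perm (Fin n)) :=
  {x | x.support ⊆ σ.support ∧ ∃ z : ℤ, x * σ * x⁻¹ = σ ^ z}

/-- Let `τ₁` be a `d`-cycle in `S_n` and let `s₁, s₂` be products of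
pairwise disjoint transpositions (i.e. involutions, possibly trivial) supported on the
support of `τ₁`, with `s₁τ₁s₁⁻¹ = s₂τ₁s₂⁻¹ = τ₁⁻¹`.  If `s₁` and `s₂` are conjugate
in `S_n`, then `τ₁^z s₁ τ₁^{-z} = s₂` for some integer `z`. -/
theorem conj_by_power_of_cycle_one_cycle
    {n d : ℕ} (τ₁ : Equiv.Perm (Fin n))
    (hτ₁ : τ₁.IsCycle) (hl₁ : τ₁.support.card = d)
    (s₁ s₂ : Equiv.Perm (Fin n))
    (hs₁supp : s₁.support ⊆ τ₁.support)
    (hs₂supp : s₂.support ⊆ τ₁.support)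
    (hs₁inv : s₁ ^ 2 = 1) (hs₂inv : s₂ ^ 2 = 1)
    (hc₁ : s₁ * τ₁ * s₁⁻¹ = τ₁⁻¹) (hc₂ : s₂ * τ₁ * s₂⁻¹ = τ₁⁻¹)
    (hconj : IsConj s₁ s₂) :
    ∃ z : ℤ, τ₁ ^ z * s₁ * (τ₁ ^ z)⁻¹ = s₂ := by
    -- `c = s₂⁻¹ * s₁` commutes with `τ₁`
  have e2 : s₂⁻¹ * τ₁⁻¹ * s₂ = τ₁ := by
    rw [← hc₂]; group
  have hcomm : Commute (s₂⁻¹ * s₁) τ₁ := by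
    have : (s₂⁻¹ * s₁) * τ₁ * (s₂⁻¹ * s₁)⁻¹ = τ₁ := by
      calc (s₂⁻¹ * s₁) * τ₁ * (s₂⁻¹ * s₁)⁻¹
          = s₂⁻¹ * (s₁ * τ₁ * s₁⁻¹) * s₂ := by group
        _ = s₂⁻¹ * τ₁⁻¹ * s₂ := by rw [hc₁]
        _ = τ₁ := e2
    have := mul_inv_eq_iff_eq_mul.mp this
    exact this
  have hsupp : (s₂⁻¹ * s₁).support ⊆ τ₁.support := by
    refine (Equiv.Perm.support_mul_le _ _).trans (sup_le ?_ hs₁supp)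
    rw [Equiv.Perm.support_inv]; exact hs₂supp
  -- hence it is a power of τ₁
  obtain ⟨hc', hz⟩ := hτ₁.commute_iff.mp hcomm
  have heq : Equiv.Perm.ofSubtype ((s₂⁻¹ * s₁).subtypePerm hc') = s₂⁻¹ * s₁ :=
    Equiv.Perm.ofSubtype_subtypePerm hc'
      (fun x hx => hsupp (Equiv.Perm.mem_support.mpr hx))
  rw [heq, Subgroup.mem_zpowers_iff] at hz
  obtain ⟨k, hk⟩ := hz
  have hs₁ : s₁ = s₂ * τ₁ ^ k := by
    rw [hk, ← mul_assoc, mul_inv_cancel, one_mul]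
  -- conjugation relation for powers
  have hrel2 : ∀ m : ℤ, s₂ * τ₁ ^ m * s₂⁻¹ = τ₁ ^ (-m) := by
    intro m
    have h := map_zpow (MulAut.conj s₂) τ₁ m
    simp only [MulAut.conj_apply] at h
    rw [hc₂, inv_zpow, ← zpow_neg] at h
    exact h
  have hrel : ∀ m : ℤ, τ₁ ^ m * s₂ = s₂ * τ₁ ^ (-m) := by
    intro m
    have h := hrel2 (-m)
    rw [neg_neg] at h
    rw [← h]
    group
  -- find z with d ∣ k - 2z
  have hord : (orderOf τ₁ : ℤ) = (d : ℤ) := by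
    rw [hτ₁.orderOf, hl₁]
  obtain ⟨z, hdvd⟩ : ∃ z : ℤ, (d : ℤ) ∣ k - 2 * z := by
    rcases Nat.even_or_odd d with hd | hd
    · -- d even: k must be even by the sign argument
      obtain ⟨g, hg⟩ := isConj_iff.mp hconj
      have hsign : Equiv.Perm.sign s₁ = Equiv.Perm.sign s₂ := by
        rw [← hg, map_mul, map_mul, map_inv, mul_comm (Equiv.Perm.sign g),
          mul_assoc, mul_inv_cancel, mul_one]
      have hsτ : Equiv.Perm.sign τ₁ = -1 := by
        rw [hτ₁.sign, hl₁, Even.neg_one_pow hd]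
      have hk1 : ((-1 : ℤˣ)) ^ k = 1 := by
        have h := hsign
        rw [hs₁, map_mul, map_zpow, hsτ] at h
        exact mul_left_cancel (h.trans (mul_one _).symm)
      have hke : Even k := by
        by_contra hodd
        rw [Int.not_even_iff_odd] at hodd
        obtain ⟨m, hm⟩ := hodd
        rw [hm, zpow_add, zpow_mul, zpow_one] at hk1
        rw [show ((-1 : ℤˣ)) ^ (2 : ℤ) = 1 from by decide, one_zpow] at hk1
        exact absurd hk1 (by decide)
      obtain ⟨m, hm⟩ := hke
      exact ⟨m, by rw [hm]; ring_nf; exact dvd_zero _⟩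
    · obtain ⟨m, hm⟩ := hd
      refine ⟨-(m * k), ⟨k, ?_⟩⟩
      have : (d : ℤ) = 2 * m + 1 := by exact_mod_cast hm
      rw [this]; ring
  refine ⟨z, ?_⟩
  calc τ₁ ^ z * s₁ * (τ₁ ^ z)⁻¹
      = (τ₁ ^ z * s₂) * (τ₁ ^ k * (τ₁ ^ z)⁻¹) := by rw [hs₁]; group
    _ = s₂ * τ₁ ^ (-z) * (τ₁ ^ k * τ₁ ^ (-z)) := by rw [hrel z, ← zpow_neg]
    _ = s₂ * τ₁ ^ (k - 2 * z) := by rw [← zpow_add, mul_assoc, ← zpow_add]; ring_nf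
    _ = s₂ := by
        rw [← hord] at hdvd
        rw [orderOf_dvd_iff_zpow_eq_one.mp hdvd, mul_one]
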